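/- The line arrangement in ℙ²(ℂ) defined by (x³ − y³)(x³ − z³)(y³ − z³) = 0 has exactly 12 points lying on three or more of the 9 lines, each such point lies on exactly 3 lines, and the arrangement has no points lying on exactly 2 of the lines. -/

import Mathlib

open Complex Real

/-- A primitive cube root of unity. -/
noncomputable def ω3 : ℂ := Complex.exp (2 * π * I / 3)

/-- The nine linear forms `x - ω^i y`, `x - ω^i z`, `y - ω^i z` (for
`i = 0, 1, 2`) cutting out the lines of the arrangement
`(x³-y³)(x³-z³)(y³-z³) = 0`, indexed by `Fin 3 × Fin 3`. -/
noncomputable def lineForm (q : Fin 3 × Fin 3) : (Fin 3 → ℂ) →ₗ[ℂ] ℂ :=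
  if q.1 = 0 then LinearMap.proj 0 - ω3 ^ (q.2 : ℕ) • LinearMap.proj 1
  else if q.1 = 1 then LinearMap.proj 0 - ω3 ^ (q.2 : ℕ) • LinearMap.proj 2
  else LinearMap.proj 1 - ω3 ^ (q.2 : ℕ) • LinearMap.proj 2

/-- The multiplicity of a point of `ℙ²(ℂ)`: the number of lines of the
arrangement passing through it. -/
noncomputable def multAt (p : Projectivization ℂ (Fin 3 → ℂ)) : ℕ :=
  Set.ncard {q : Fin 3 × Fin 3 | lineForm q p.rep = 0}

/- ### Auxiliary lemmas about `ω3` -/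

lemma hprim : IsPrimitiveRoot ω3 3 := Complex.isPrimitiveRoot_exp 3 (by norm_num)

lemma omega_ne : ω3 ≠ 0 := Complex.exp_ne_zero _

lemma omega_pow_ne (i : ℕ) : ω3 ^ i ≠ 0 := pow_ne_zero _ omega_ne

lemma omega_cube : ω3 ^ 3 = 1 := hprim.pow_eq_one

lemma pow_eq_pow_iff (i j : Fin 3) : ω3 ^ (i : ℕ) = ω3 ^ (j : ℕ) ↔ i = j :=
  ⟨fun h => Fin.ext (hprim.pow_inj i.isLt j.isLt h), fun h => by rw [h]⟩

lemma omega_mul (i j : Fin 3) :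
    ω3 ^ (i : ℕ) * ω3 ^ (j : ℕ) = ω3 ^ ((i + j : Fin 3) : ℕ) := by
  rw [← pow_add]
  have h : ((i + j : Fin 3) : ℕ) = ((i : ℕ) + (j : ℕ)) % 3 := by simp [Fin.add_def]
  rw [h]
  conv_lhs => rw [← Nat.mod_add_div ((i : ℕ) + (j : ℕ)) 3]
  rw [pow_add, pow_mul, omega_cube, one_pow, mul_one]

lemma omega_pow_eq_one_iff (i : Fin 3) : ω3 ^ (i : ℕ) = 1 ↔ i = 0 := by
  have : (1 : ℂ) = ω3 ^ (((0 : Fin 3)) : ℕ) := by norm_num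
  rw [this, pow_eq_pow_iff]

lemma cube_eq {a b : ℂ} (hb : b ≠ 0) (h : a ^ 3 = b ^ 3) :
    ∃ i : Fin 3, a = ω3 ^ (i : ℕ) * b := by
  have h1 : (a / b) ^ 3 = 1 := by rw [div_pow, h, div_self (pow_ne_zero 3 hb)]
  obtain ⟨i, hi, hieq⟩ := hprim.eq_pow_of_pow_eq_one h1
  refine ⟨⟨i, hi⟩, ?_⟩
  rw [hieq, div_mul_cancel₀ _ hb]

lemma cube_of (i : Fin 3) (b : ℂ) : (ω3 ^ (i : ℕ) * b) ^ 3 = b ^ 3 := by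
  rw [mul_pow, ← pow_mul, mul_comm (i : ℕ) 3, pow_mul, omega_cube, one_pow, one_mul]

/- ### `lineForm` evaluation -/

lemma lf0 (i : Fin 3) (v : Fin 3 → ℂ) : lineForm (0, i) v = v 0 - ω3 ^ (i : ℕ) * v 1 := by
  simp [lineForm]

lemma lf1 (i : Fin 3) (v : Fin 3 → ℂ) : lineForm (1, i) v = v 0 - ω3 ^ (i : ℕ) * v 2 := by
  simp [lineForm]

lemma lf2 (i : Fin 3) (v : Fin 3 → ℂ) : lineForm (2, i) v = v 1 - ω3 ^ (i : ℕ) * v 2 := by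
  simp [lineForm]

/- ### Vector-level multiplicity -/

noncomputable def mult (v : Fin 3 → ℂ) : ℕ :=
  Set.ncard {q : Fin 3 × Fin 3 | lineForm q v = 0}

lemma multAt_eq (p : Projectivization ℂ (Fin 3 → ℂ)) : multAt p = mult p.rep := rfl

lemma mult_smul {c : ℂ} (hc : c ≠ 0) (v : Fin 3 → ℂ) : mult (c • v) = mult v := by
  unfold mult
  congr 1
  ext q
  simp only [Set.mem_setOf_eq, map_smul, smul_eq_mul, mul_eq_zero]
  tauto

lemma multAt_mk (v : Fin 3 → ℂ) (hv : v ≠ 0) :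
    multAt (Projectivization.mk ℂ v hv) = mult v := by
  obtain ⟨c, hc⟩ := (Projectivization.mk_eq_mk_iff' ℂ _ _
      (Projectivization.rep_nonzero _) hv).mp
      (Projectivization.mk_rep (Projectivization.mk ℂ v hv))
  have hc0 : c ≠ 0 := by
    rintro rfl
    rw [zero_smul] at hc
    exact Projectivization.rep_nonzero _ hc.symm
  rw [multAt_eq, ← hc, mult_smul hc0]

/- ### Multiplicity at the twelve special points -/


lemma fin3_cases (f : Fin 3) : f = 0 ∨ f = 1 ∨ f = 2 := by omega


lemma omega_one_eq_pow_iff (i : Fin 3) : (1 : ℂ) = ω3 ^ (i : ℕ) ↔ i = 0 := by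
  rw [eq_comm, omega_pow_eq_one_iff]


lemma mult_single (k : Fin 3) : mult (Pi.single k 1) = 3 := by
  rcases fin3_cases k with rfl | rfl | rfl
  · have h : {q : Fin 3 × Fin 3 | lineForm q (Pi.single 0 1) = 0} =
        ↑({((2 : Fin 3), (0 : Fin 3)), (2, 1), (2, 2)} : Finset (Fin 3 × Fin 3)) := by
      ext ⟨f, i⟩
      rcases fin3_cases f with rfl | rfl | rfl <;>
          simp [lf0, lf1, lf2, Pi.single_apply, Prod.ext_iff, omega_ne, sub_eq_zero] <;>
        omega
    rw [mult, h, Set.ncard_coe_finset]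
    decide
  · have h : {q : Fin 3 × Fin 3 | lineForm q (Pi.single 1 1) = 0} =
        ↑({((1 : Fin 3), (0 : Fin 3)), (1, 1), (1, 2)} : Finset (Fin 3 × Fin 3)) := by
      ext ⟨f, i⟩
      rcases fin3_cases f with rfl | rfl | rfl <;>
          simp [lf0, lf1, lf2, Pi.single_apply, Prod.ext_iff, omega_ne, sub_eq_zero] <;>
        omega
    rw [mult, h, Set.ncard_coe_finset]
    decide
  · have h : {q : Fin 3 × Fin 3 | lineForm q (Pi.single 2 1) = 0} =
        ↑({((0 : Fin 3), (0 : Fin 3)), (0, 1), (0, 2)} : Finset (Fin 3 × Fin 3)) := by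
      ext ⟨f, i⟩
      rcases fin3_cases f with rfl | rfl | rfl <;>
          simp [lf0, lf1, lf2, Pi.single_apply, Prod.ext_iff, omega_ne, sub_eq_zero] <;>
        omega
    rw [mult, h, Set.ncard_coe_finset]
    decide

lemma mult_pt (a b : Fin 3) : mult ![1, ω3 ^ (a : ℕ), ω3 ^ (b : ℕ)] = 3 := by
  have h : {q : Fin 3 × Fin 3 | lineForm q ![1, ω3 ^ (a : ℕ), ω3 ^ (b : ℕ)] = 0} =
      ↑({((0 : Fin 3), -a), (1, -b), (2, a - b)} : Finset (Fin 3 × Fin 3)) := by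
    ext ⟨f, i⟩
    simp only [Set.mem_setOf_eq, Finset.coe_insert, Set.mem_insert_iff,
      Finset.coe_singleton, Set.mem_singleton_iff]
    rcases fin3_cases f with rfl | rfl | rfl
    · rw [lf0, show (![1, ω3 ^ (a : ℕ), ω3 ^ (b : ℕ)] : Fin 3 → ℂ) 0 = 1 from rfl,
        show (![1, ω3 ^ (a : ℕ), ω3 ^ (b : ℕ)] : Fin 3 → ℂ) 1 = ω3 ^ (a : ℕ) from rfl,
        sub_eq_zero, omega_mul, omega_one_eq_pow_iff]
      rcases fin3_cases a with rfl | rfl | rfl <;> rcases fin3_cases b with rfl | rfl | rfl <;>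
        rcases fin3_cases i with rfl | rfl | rfl <;> decide
    · rw [lf1, show (![1, ω3 ^ (a : ℕ), ω3 ^ (b : ℕ)] : Fin 3 → ℂ) 0 = 1 from rfl,
        show (![1, ω3 ^ (a : ℕ), ω3 ^ (b : ℕ)] : Fin 3 → ℂ) 2 = ω3 ^ (b : ℕ) from rfl,
        sub_eq_zero, omega_mul, omega_one_eq_pow_iff]
      rcases fin3_cases a with rfl | rfl | rfl <;> rcases fin3_cases b with rfl | rfl | rfl <;>
        rcases fin3_cases i with rfl | rfl | rfl <;> decide
    · rw [lf2, show (![1, ω3 ^ (a : ℕ), ω3 ^ (b : ℕ)] : Fin 3 → ℂ) 1 = ω3 ^ (a : ℕ) from rfl,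
        show (![1, ω3 ^ (a : ℕ), ω3 ^ (b : ℕ)] : Fin 3 → ℂ) 2 = ω3 ^ (b : ℕ) from rfl,
        sub_eq_zero, omega_mul, pow_eq_pow_iff]
      rcases fin3_cases a with rfl | rfl | rfl <;> rcases fin3_cases b with rfl | rfl | rfl <;>
        rcases fin3_cases i with rfl | rfl | rfl <;> decide
  rw [mult, h, Set.ncard_coe_finset]
  rcases fin3_cases a with rfl | rfl | rfl <;> rcases fin3_cases b with rfl | rfl | rfl <;> decide

/- ### Relations coming from a vanishing line form -/

lemma cube_rel {p r : ℂ} {i : Fin 3} (h : p - ω3 ^ (i : ℕ) * r = 0) : p ^ 3 = r ^ 3 := by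
  rw [sub_eq_zero.mp h, cube_of]

lemma rel_right_zero {p r : ℂ} {i : Fin 3} (h : p - ω3 ^ (i : ℕ) * r = 0) (hp : p = 0) :
    r = 0 := by
  rw [hp, zero_sub, neg_eq_zero, mul_eq_zero] at h
  rcases h with h | h
  · exact absurd h (omega_pow_ne _)
  · exact h

lemma rel_left_zero {p r : ℂ} {i : Fin 3} (h : p - ω3 ^ (i : ℕ) * r = 0) (hr : r = 0) :
    p = 0 := by
  rw [sub_eq_zero.mp h, hr, mul_zero]

lemma rel_left_ne {p r : ℂ} {i : Fin 3} (h : p - ω3 ^ (i : ℕ) * r = 0) (hr : r ≠ 0) :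
    p ≠ 0 := fun hp => hr (rel_right_zero h hp)

lemma same_fam {i j : Fin 3} {p r : ℂ} (hij : i ≠ j)
    (h1 : p - ω3 ^ (i : ℕ) * r = 0) (h2 : p - ω3 ^ (j : ℕ) * r = 0) : p = 0 ∧ r = 0 := by
  have h3 : (ω3 ^ (i : ℕ) - ω3 ^ (j : ℕ)) * r = 0 := by linear_combination h2 - h1
  have hr : r = 0 := by
    rcases mul_eq_zero.mp h3 with h | h
    · exact absurd ((pow_eq_pow_iff i j).mp (sub_eq_zero.mp h)) hij
    · exact h
  exact ⟨rel_left_zero h1 hr, hr⟩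

lemma to_single {v : Fin 3 → ℂ} (hv : v ≠ 0) (k : Fin 3) (h : ∀ l, l ≠ k → v l = 0) :
    ∃ c : ℂ, c ≠ 0 ∧ v = c • (Pi.single k 1 : Fin 3 → ℂ) := by
  refine ⟨v k, ?_, ?_⟩
  · intro h0
    apply hv
    funext l
    by_cases hl : l = k
    · rw [hl, h0]; rfl
    · rw [h l hl]; rfl
  · funext l
    by_cases hl : l = k
    · subst hl; simp
    · simp [Pi.single_apply, hl, h l hl]

lemma to_pt {v : Fin 3 → ℂ} (h0 : v 0 ≠ 0) (h01 : v 0 ^ 3 = v 1 ^ 3)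
    (h02 : v 0 ^ 3 = v 2 ^ 3) :
    ∃ a b : Fin 3, ∃ c : ℂ, c ≠ 0 ∧ v = c • ![1, ω3 ^ (a : ℕ), ω3 ^ (b : ℕ)] := by
  obtain ⟨a, ha⟩ := cube_eq h0 h01.symm
  obtain ⟨b, hb⟩ := cube_eq h0 h02.symm
  refine ⟨a, b, v 0, h0, ?_⟩
  funext l
  rcases fin3_cases l with rfl | rfl | rfl
  · simp
  · simp only [Pi.smul_apply, smul_eq_mul, Matrix.cons_val_one, Matrix.head_cons, Matrix.cons_val_zero]
    rw [ha]; ring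
  · simp only [Pi.smul_apply, smul_eq_mul]
    rw [show (![1, ω3 ^ (a : ℕ), ω3 ^ (b : ℕ)] : Fin 3 → ℂ) 2 = ω3 ^ (b : ℕ) from rfl, hb]
    ring

lemma mixed01 {v : Fin 3 → ℂ} (hv : v ≠ 0) {i j : Fin 3}
    (h1 : v 0 - ω3 ^ (i : ℕ) * v 1 = 0) (h2 : v 0 - ω3 ^ (j : ℕ) * v 2 = 0) :
    ∃ a b : Fin 3, ∃ c : ℂ, c ≠ 0 ∧ v = c • ![1, ω3 ^ (a : ℕ), ω3 ^ (b : ℕ)] := by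
  by_cases hy : v 1 = 0
  · exfalso
    apply hv
    have hx : v 0 = 0 := rel_left_zero h1 hy
    have hz : v 2 = 0 := rel_right_zero h2 hx
    funext l
    rcases fin3_cases l with rfl | rfl | rfl <;> assumption
  · exact to_pt (rel_left_ne h1 hy) (cube_rel h1) (cube_rel h2)

lemma mixed02 {v : Fin 3 → ℂ} (hv : v ≠ 0) {i j : Fin 3}
    (h1 : v 0 - ω3 ^ (i : ℕ) * v 1 = 0) (h2 : v 1 - ω3 ^ (j : ℕ) * v 2 = 0) :
    ∃ a b : Fin 3, ∃ c : ℂ, c ≠ 0 ∧ v = c • ![1, ω3 ^ (a : ℕ), ω3 ^ (b : ℕ)] := by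
  by_cases hy : v 1 = 0
  · exfalso
    apply hv
    have hx : v 0 = 0 := rel_left_zero h1 hy
    have hz : v 2 = 0 := rel_right_zero h2 hy
    funext l
    rcases fin3_cases l with rfl | rfl | rfl <;> assumption
  · exact to_pt (rel_left_ne h1 hy) (cube_rel h1) ((cube_rel h1).trans (cube_rel h2))

lemma mixed12 {v : Fin 3 → ℂ} (hv : v ≠ 0) {i j : Fin 3}
    (h1 : v 0 - ω3 ^ (i : ℕ) * v 2 = 0) (h2 : v 1 - ω3 ^ (j : ℕ) * v 2 = 0) :
    ∃ a b : Fin 3, ∃ c : ℂ, c ≠ 0 ∧ v = c • ![1, ω3 ^ (a : ℕ), ω3 ^ (b : ℕ)] := by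
  by_cases hz : v 2 = 0
  · exfalso
    apply hv
    have hx : v 0 = 0 := rel_left_zero h1 hz
    have hy : v 1 = 0 := rel_left_zero h2 hz
    funext l
    rcases fin3_cases l with rfl | rfl | rfl <;> assumption
  · exact to_pt (rel_left_ne h1 hz) ((cube_rel h1).trans (cube_rel h2).symm) (cube_rel h1)

/- ### Classification of points of multiplicity at least two -/

lemma class2 {v : Fin 3 → ℂ} (hv : v ≠ 0) (h2 : 2 ≤ mult v) :
    (∃ k : Fin 3, ∃ c : ℂ, c ≠ 0 ∧ v = c • (Pi.single k 1 : Fin 3 → ℂ)) ∨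
    (∃ a b : Fin 3, ∃ c : ℂ, c ≠ 0 ∧ v = c • ![1, ω3 ^ (a : ℕ), ω3 ^ (b : ℕ)]) := by
  have h2' : 1 < Set.ncard {q : Fin 3 × Fin 3 | lineForm q v = 0} := by
    unfold mult at h2; omega
  obtain ⟨q1, q2, hq1, hq2, hne⟩ := (Set.one_lt_ncard_iff (Set.toFinite _)).mp h2'
  obtain ⟨f1, i1⟩ := q1
  obtain ⟨f2, i2⟩ := q2
  simp only [Set.mem_setOf_eq] at hq1 hq2
  rcases fin3_cases f1 with rfl | rfl | rfl <;> rcases fin3_cases f2 with rfl | rfl | rfl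
  · rw [lf0] at hq1 hq2
    have hii : i1 ≠ i2 := fun h => hne (by rw [h])
    obtain ⟨hx, hy⟩ := same_fam hii hq1 hq2
    refine Or.inl ⟨2, to_single hv 2 ?_⟩
    intro l hl
    rcases fin3_cases l with rfl | rfl | rfl
    exacts [hx, hy, absurd rfl hl]
  · rw [lf0] at hq1; rw [lf1] at hq2
    exact Or.inr (mixed01 hv hq1 hq2)
  · rw [lf0] at hq1; rw [lf2] at hq2
    exact Or.inr (mixed02 hv hq1 hq2)
  · rw [lf1] at hq1; rw [lf0] at hq2
    exact Or.inr (mixed01 hv hq2 hq1)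
  · rw [lf1] at hq1 hq2
    have hii : i1 ≠ i2 := fun h => hne (by rw [h])
    obtain ⟨hx, hz⟩ := same_fam hii hq1 hq2
    refine Or.inl ⟨1, to_single hv 1 ?_⟩
    intro l hl
    rcases fin3_cases l with rfl | rfl | rfl
    exacts [hx, absurd rfl hl, hz]
  · rw [lf1] at hq1; rw [lf2] at hq2
    exact Or.inr (mixed12 hv hq1 hq2)
  · rw [lf2] at hq1; rw [lf0] at hq2
    exact Or.inr (mixed02 hv hq2 hq1)
  · rw [lf2] at hq1; rw [lf1] at hq2
    exact Or.inr (mixed12 hv hq2 hq1)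
  · rw [lf2] at hq1 hq2
    have hii : i1 ≠ i2 := fun h => hne (by rw [h])
    obtain ⟨hy, hz⟩ := same_fam hii hq1 hq2
    refine Or.inl ⟨0, to_single hv 0 ?_⟩
    intro l hl
    rcases fin3_cases l with rfl | rfl | rfl
    exacts [absurd rfl hl, hy, hz]

lemma mult_eq_three_of_two_le {v : Fin 3 → ℂ} (hv : v ≠ 0) (h2 : 2 ≤ mult v) :
    mult v = 3 := by
  rcases class2 hv h2 with ⟨k, c, hc, rfl⟩ | ⟨a, b, c, hc, rfl⟩
  · rw [mult_smul hc, mult_single]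
  · rw [mult_smul hc, mult_pt]

/- ### The twelve triple points -/

noncomputable def ptV (a b : Fin 3) : Fin 3 → ℂ := ![1, ω3 ^ (a : ℕ), ω3 ^ (b : ℕ)]

lemma ptV_ne_coord (a b l : Fin 3) : ptV a b l ≠ 0 := by
  rcases fin3_cases l with rfl | rfl | rfl
  · exact one_ne_zero
  · exact omega_pow_ne _
  · exact omega_pow_ne _

lemma ptV_ne (a b : Fin 3) : ptV a b ≠ 0 := fun h => ptV_ne_coord a b 0 (congrFun h 0)

lemma single_ne (k : Fin 3) : (Pi.single k 1 : Fin 3 → ℂ) ≠ 0 := by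
  intro h
  have h1 := congrFun h k
  rw [Pi.single_eq_same] at h1
  exact one_ne_zero h1

noncomputable def pts : Fin 3 ⊕ Fin 3 × Fin 3 → Projectivization ℂ (Fin 3 → ℂ)
  | .inl k => Projectivization.mk ℂ (Pi.single k 1) (single_ne k)
  | .inr (a, b) => Projectivization.mk ℂ (ptV a b) (ptV_ne a b)

lemma multAt_pts (t : Fin 3 ⊕ Fin 3 × Fin 3) : multAt (pts t) = 3 := by
  rcases t with k | ⟨a, b⟩
  · rw [pts, multAt_mk, mult_single]
  · rw [pts, multAt_mk]
    exact mult_pt a b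

lemma not_single_eq_pt (k a b : Fin 3) :
    Projectivization.mk ℂ (Pi.single k 1) (single_ne k) ≠
      Projectivization.mk ℂ (ptV a b) (ptV_ne a b) := by
  intro h
  obtain ⟨c, hc⟩ := (Projectivization.mk_eq_mk_iff' ℂ _ _ _ _).mp h
  have hl : k + 1 ≠ k := by omega
  have h1 := congrFun hc (k + 1)
  rw [Pi.smul_apply, smul_eq_mul, Pi.single_eq_of_ne hl] at h1
  rcases mul_eq_zero.mp h1 with hc0 | hc0
  · have h0 := congrFun hc k
    rw [Pi.smul_apply, smul_eq_mul, Pi.single_eq_same, hc0, zero_mul] at h0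
    exact zero_ne_one h0
  · exact ptV_ne_coord a b _ hc0

lemma pts_inj : Function.Injective pts := by
  rintro (k1 | ⟨a1, b1⟩) (k2 | ⟨a2, b2⟩) h
  · obtain ⟨c, hc⟩ := (Projectivization.mk_eq_mk_iff' ℂ _ _ _ _).mp h
    congr 1
    by_contra hk
    have h1 := congrFun hc k1
    rw [Pi.smul_apply, smul_eq_mul, Pi.single_eq_of_ne hk, mul_zero,
      Pi.single_eq_same] at h1
    exact zero_ne_one h1
  · exact absurd h (not_single_eq_pt k1 a2 b2)
  · exact absurd h.symm (not_single_eq_pt k2 a1 b1)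
  · obtain ⟨c, hc⟩ := (Projectivization.mk_eq_mk_iff' ℂ _ _ _ _).mp h
    have h0 := congrFun hc 0
    rw [Pi.smul_apply, smul_eq_mul, show ptV a2 b2 0 = 1 from rfl,
      show ptV a1 b1 0 = 1 from rfl, mul_one] at h0
    have h1 := congrFun hc 1
    rw [Pi.smul_apply, smul_eq_mul, show ptV a2 b2 1 = ω3 ^ (a2 : ℕ) from rfl,
      show ptV a1 b1 1 = ω3 ^ (a1 : ℕ) from rfl, h0, one_mul] at h1
    have h2 := congrFun hc 2
    rw [Pi.smul_apply, smul_eq_mul, show ptV a2 b2 2 = ω3 ^ (b2 : ℕ) from rfl,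
      show ptV a1 b1 2 = ω3 ^ (b1 : ℕ) from rfl, h0, one_mul] at h2
    rw [(pow_eq_pow_iff a2 a1).mp h1, (pow_eq_pow_iff b2 b1).mp h2]

/-- The arrangement `(x³-y³)(x³-z³)(y³-z³) = 0` of 9 lines in `ℙ²(ℂ)` has
exactly 12 points of multiplicity `≥ 3`, every such point has multiplicity
exactly 3, and there are no double points. -/
theorem ceva_arrangement_intersection_points :
    Set.ncard {p : Projectivization ℂ (Fin 3 → ℂ) | 3 ≤ multAt p} = 12 ∧
    (∀ p : Projectivization ℂ (Fin 3 → ℂ), 3 ≤ multAt p → multAt p = 3) ∧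
    (∀ p : Projectivization ℂ (Fin 3 → ℂ), multAt p ≠ 2) := by
  have hset : {p : Projectivization ℂ (Fin 3 → ℂ) | 3 ≤ multAt p} = Set.range pts := by
    ext p
    simp only [Set.mem_setOf_eq, Set.mem_range]
    constructor
    · intro hp
      have h2 : 2 ≤ mult p.rep := by rw [multAt_eq] at hp; omega
      rcases class2 p.rep_nonzero h2 with ⟨k, c, hc, hv⟩ | ⟨a, b, c, hc, hv⟩
      · refine ⟨.inl k, ?_⟩
        show Projectivization.mk ℂ (Pi.single k 1) (single_ne k) = p
        conv_rhs => rw [← Projectivization.mk_rep p]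
        rw [Projectivization.mk_eq_mk_iff']
        exact ⟨c⁻¹, by rw [hv, smul_smul, inv_mul_cancel₀ hc, one_smul]⟩
      · refine ⟨.inr (a, b), ?_⟩
        show Projectivization.mk ℂ (ptV a b) (ptV_ne a b) = p
        conv_rhs => rw [← Projectivization.mk_rep p]
        rw [Projectivization.mk_eq_mk_iff']
        exact ⟨c⁻¹, by rw [hv, smul_smul, inv_mul_cancel₀ hc, one_smul]; rfl⟩
    · rintro ⟨t, rfl⟩
      exact (multAt_pts t).ge
  refine ⟨?_, ?_, ?_⟩
  · rw [hset, ← Set.image_univ, Set.ncard_image_of_injective _ pts_inj, Set.ncard_univ]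
    simp [Nat.card_eq_fintype_card]
  · intro p hp
    rw [multAt_eq] at hp ⊢
    exact mult_eq_three_of_two_le p.rep_nonzero (by omega)
  · intro p hp
    rw [multAt_eq] at hp
    have := mult_eq_three_of_two_le p.rep_nonzero (by omega)
    omega
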